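/- Let E be an elliptic curve over a finite field k, let N be square-free with prime divisors P(N), let G_r = ker τ_{r/1}, X_N = ∪_{r∈P(N)} G_r, D_N = (X_N), and D_r = (G_r), and fix P = 0 ∈ X_N. Then L_0(D_N) = ⊕_{r ∈ P(N)} L_0(D_r), and dim L_0(D_N) = Σ_{r∈P(N)} (|(α)_r|^2 − 1), where α is the Frobenius eigenvalue. -/

import Mathlib

open scoped Classical

noncomputable def setDiv {pt : Type} (Z : Finset pt) : pt →₀ ℤ :=
  ∑ z ∈ Z, Finsupp.single z 1

lemma setDiv_apply {pt : Type} (Z : Finset pt) (a : pt) :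
    setDiv Z a = if a ∈ Z then 1 else 0 := by
  classical
  rw [setDiv, Finsupp.finset_sum_apply]
  simp [Finsupp.single_apply]

lemma setDiv_nonneg {pt : Type} (Z : Finset pt) : 0 ≤ setDiv Z := by
  rw [Finsupp.le_def]
  intro a
  rw [setDiv_apply]
  split <;> simp

lemma setDiv_mono {pt : Type} {Z Z' : Finset pt} (h : Z ⊆ Z') : setDiv Z ≤ setDiv Z' := by
  rw [Finsupp.le_def]
  intro a
  rw [setDiv_apply, setDiv_apply]
  by_cases ha : a ∈ Z
  · simp [ha, h ha]
  · simp [ha]; split <;> simp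

lemma setDiv_deg {pt : Type} (Z : Finset pt) :
    ((setDiv Z).sum fun _ n => n) = (Z.card : ℤ) := by
  classical
  induction Z using Finset.induction_on with
  | empty => simp [setDiv]
  | insert a s ha ih =>
    rw [setDiv, Finset.sum_insert ha, ← setDiv,
      Finsupp.sum_add_index' (fun _ => rfl) (fun _ _ _ => rfl), Finsupp.sum_single_index rfl, ih,
      Finset.card_insert_of_notMem ha]
    push_cast; ring

lemma setDiv_ne_zero {pt : Type} {Z : Finset pt} (h : Z.Nonempty) : setDiv Z ≠ 0 := by
  obtain ⟨a, ha⟩ := h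
  intro h0
  have := congrArg (fun f : pt →₀ ℤ => f a) h0
  simp [setDiv_apply, ha] at this

/-- Points killed by two coprime-index "trace" maps are zero. -/
lemma pairwise_triv {A : Type} [AddCommGroup A] (F : AddMonoid.End A) (r s : ℕ)
    (hr : r.Prime) (hs : s.Prime) (hrs : r ≠ s) (x : A)
    (hxr : (∑ i ∈ Finset.range r, F ^ i : AddMonoid.End A) x = 0)
    (hxs : (∑ i ∈ Finset.range s, F ^ i : AddMonoid.End A) x = 0) : x = 0 := by
  have cop : Nat.Coprime r s := (Nat.coprime_primes hr hs).2 hrs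
  have hfix : ∀ n : ℕ, (∑ i ∈ Finset.range n, F ^ i : AddMonoid.End A) x = 0 →
      (F ^ n) x = x := by
    intro n hn
    have h := congrArg (fun g : AddMonoid.End A => g x) (mul_geom_sum F n)
    have h1 : ((F - 1) * ∑ i ∈ Finset.range n, F ^ i : AddMonoid.End A) x
        = (F - 1) ((∑ i ∈ Finset.range n, F ^ i : AddMonoid.End A) x) := rfl
    rw [h1, hn, map_zero] at h
    have h2 : (F ^ n) x - (1 : AddMonoid.End A) x = 0 := h.symm
    simpa [sub_eq_zero] using h2
  have hr' := hfix r hxr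
  have hs' := hfix s hxs
  have hiter : ∀ (m : ℕ), (F ^ m) x = x → ∀ q : ℕ, (F ^ (m * q)) x = x := by
    intro m hm q
    induction q with
    | zero => simp
    | succ q ih =>
      have : (F ^ (m * q + m)) x = (F ^ (m * q)) ((F ^ m) x) := by
        rw [pow_add]; rfl
      rw [Nat.mul_succ, this, hm, ih]
  obtain ⟨b, -, hb⟩ := Nat.exists_mul_mod_eq_one_of_coprime cop hs.one_lt
  have hFx : F x = x := by
    have h1 : (F ^ (r * b)) x = x := hiter r hr' b
    have h2 : r * b = s * (r * b / s) + 1 := by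
      conv_lhs => rw [← Nat.div_add_mod (r * b) s]
      rw [hb]
    have h3 : (F ^ (s * (r * b / s) + 1)) x = F ((F ^ (s * (r * b / s))) x) := by
      rw [pow_succ']; rfl
    rw [h2, h3, hiter s hs' _] at h1
    exact h1
  have hpow : ∀ i : ℕ, (F ^ i) x = x := by
    intro i
    induction i with
    | zero => rfl
    | succ i ih => rw [pow_succ']; show F ((F ^ i) x) = x; rw [ih, hFx]
  have hsum : ∀ n : ℕ, (∑ i ∈ Finset.range n, F ^ i : AddMonoid.End A) x = n • x := by
    intro n
    have : (∑ i ∈ Finset.range n, F ^ i : AddMonoid.End A) x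
        = ∑ i ∈ Finset.range n, (F ^ i) x := by
      induction (Finset.range n) using Finset.cons_induction with
      | empty => rfl
      | cons a t ha ih => rw [Finset.sum_cons, Finset.sum_cons, ← ih]; rfl
    rw [this]
    simp [hpow]
  have hrx : (r : ℤ) • x = 0 := by
    have := hsum r; rw [hxr] at this; rw [natCast_zsmul, ← this]
  have hsx : (s : ℤ) • x = 0 := by
    have := hsum s; rw [hxs] at this; rw [natCast_zsmul, ← this]
  have hbez : (1 : ℤ) = r * Nat.gcdA r s + s * Nat.gcdB r s := by
    have := Nat.gcd_eq_gcd_ab r s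
    rwa [cop] at this
  calc x = (1 : ℤ) • x := (one_zsmul x).symm
    _ = ((r : ℤ) * Nat.gcdA r s) • x + ((s : ℤ) * Nat.gcdB r s) • x := by
        rw [← add_zsmul, ← hbez]
    _ = 0 := by
        rw [mul_comm (r : ℤ), mul_comm (s : ℤ), mul_zsmul, mul_zsmul, hrx, hsx,
          smul_zero, smul_zero, add_zero]

/-- Model of an elliptic curve `E` over a finite field `k`: the abelian
group `A = E(k̄)` of points carries the `q`-power Frobenius `F`, `K` is the function
field, `dv` the principal-divisor map and `L` the Riemann–Roch spaces (with
`dim L(D) = deg D` for `D ≥ 0`, `D ≠ 0`, and constants the only regular functions).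
Let `N` be a positive square-free integer with prime divisors `P(N) = N.primeFactors`,
`G_r = ker τ_{r/1}` (given as finite sets `G r`), `X_N = ∪_{r∈P(N)} G_r`,
`D_N = (X_N)`, `D_r = (G_r)`, and take the base point `P = 0 ∈ X_N`; `ev` is evaluation
at `0` on `L(D_N)` and `L_0(D) = {f ∈ L(D) : f(0) = 0}` is its kernel intersected with
`L(D)`.  Let `α` be the Frobenius eigenvalue, so `|G_r| = |(α)_r|²`.  Then
`L_0(D_N) = ⊕_{r ∈ P(N)} L_0(D_r)` (an internal direct sum: the family is independent
and its sup is `L_0(D_N)`), and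
`dim L_0(D_N) = Σ_{r∈P(N)} (|(α)_r|² - 1)`. -/
theorem stmt15 {k K A : Type} [Field k] [Fintype k] [Field K] [Algebra k K]
    [AddCommGroup A]
    (F : AddMonoid.End A)
    (dv : Kˣ → (A →₀ ℤ))
    (L : (A →₀ ℤ) → Submodule k K)
    (hL : ∀ (D : A →₀ ℤ) (f : K),
      f ∈ L D ↔ f = 0 ∨ ∃ u : Kˣ, (u : K) = f ∧ 0 ≤ dv u + D)
    (hRR : ∀ D : A →₀ ℤ, 0 ≤ D → D ≠ 0 →
      Module.finrank k (L D) = (D.sum fun _ n => n).toNat)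
    (hL0 : ∀ f ∈ L 0, ∃ c : k, algebraMap k K c = f)
    (hconst : ∀ c : k, algebraMap k K c ∈ L 0)
    (hmono : ∀ D D' : A →₀ ℤ, D ≤ D' → L D ≤ L D')
    (N : ℕ) (hN0 : 0 < N) (hN : Squarefree N)
    (G : ℕ → Finset A)
    (hG : ∀ r, (G r : Set A) =
      (AddMonoidHom.ker ((∑ i ∈ Finset.range r, F ^ i : AddMonoid.End A) : A →+ A) :
        Set A))
    (α : ℂ)
    (hcardG : ∀ r ∈ N.primeFactors, ((G r).card : ℂ) =
      (∑ i ∈ Finset.range r, α ^ i) * (∑ i ∈ Finset.range r, ((starRingEnd ℂ) α) ^ i))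
    (ev : (L (setDiv (N.primeFactors.biUnion G))) →ₗ[k] k)
    (hev : ∀ (f : L (setDiv (N.primeFactors.biUnion G))) (c : k),
      (f : K) = algebraMap k K c → ev f = c) :
    iSupIndep (fun r : N.primeFactors =>
      LinearMap.ker ev ⊓
        Submodule.comap (L (setDiv (N.primeFactors.biUnion G))).subtype
          (L (setDiv (G (r : ℕ))))) ∧
    (⨆ r : N.primeFactors,
      LinearMap.ker ev ⊓
        Submodule.comap (L (setDiv (N.primeFactors.biUnion G))).subtype
          (L (setDiv (G (r : ℕ))))) = LinearMap.ker ev ∧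
    (Module.finrank k (LinearMap.ker ev) : ℂ) =
      ∑ r ∈ N.primeFactors,
        ((∑ i ∈ Finset.range r, α ^ i) *
            (∑ i ∈ Finset.range r, ((starRingEnd ℂ) α) ^ i) - 1) := by
  classical
  -- basic membership facts
  have hG0 : ∀ r, (0 : A) ∈ G r := by
    intro r
    have : (0 : A) ∈ (G r : Set A) := by
      rw [hG r]
      exact (AddMonoidHom.ker _).zero_mem
    exact_mod_cast this
  have hGmem : ∀ r (x : A), x ∈ G r →
      (∑ i ∈ Finset.range r, F ^ i : AddMonoid.End A) x = 0 := by
    intro r x hx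
    have : x ∈ (G r : Set A) := hx
    rw [hG r] at this
    exact this
  have hpair : ∀ r ∈ N.primeFactors, ∀ s ∈ N.primeFactors, r ≠ s →
      ∀ x : A, x ∈ G r → x ∈ G s → x = 0 := by
    intro r hr s hs hrs x hxr hxs
    exact pairwise_triv F r s (Nat.prime_of_mem_primeFactors hr)
      (Nat.prime_of_mem_primeFactors hs) hrs x (hGmem r x hxr) (hGmem s x hxs)
  -- constants are exactly L (setDiv {0})
  have hLone : ∀ f : K, f ∈ L (setDiv ({0} : Finset A)) → ∃ c : k, algebraMap k K c = f := by
    have hCle : LinearMap.range (Algebra.linearMap k K) ≤ L (setDiv ({0} : Finset A)) := by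
      rintro _ ⟨c, rfl⟩
      exact hmono 0 _ (setDiv_nonneg _) (hconst c)
    have hC1 : Module.finrank k (LinearMap.range (Algebra.linearMap k K)) = 1 := by
      rw [LinearMap.finrank_range_of_inj]
      · exact Module.finrank_self k
      · exact fun a b hab => (algebraMap k K).injective hab
    have hL1 : Module.finrank k (L (setDiv ({0} : Finset A))) = 1 := by
      rw [hRR _ (setDiv_nonneg _) (setDiv_ne_zero ⟨0, Finset.mem_singleton_self 0⟩),
        setDiv_deg]
      simp
    haveI : FiniteDimensional k (L (setDiv ({0} : Finset A))) :=
      FiniteDimensional.of_finrank_pos (by rw [hL1]; norm_num)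
    have heq : LinearMap.range (Algebra.linearMap k K) = L (setDiv ({0} : Finset A)) :=
      Submodule.eq_of_le_of_finrank_le hCle (by rw [hC1, hL1])
    intro f hf
    rw [← heq] at hf
    obtain ⟨c, hc⟩ := hf
    exact ⟨c, hc⟩
  -- intersections of Riemann-Roch spaces
  have hLinf : ∀ (Y Z : Finset A) (f : K), f ∈ L (setDiv Y) → f ∈ L (setDiv Z) →
      f ∈ L (setDiv (Y ∩ Z)) := by
    intro Y Z f hY hZ
    rcases (hL _ f).1 hY with rfl | ⟨u, hu, hu1⟩
    · exact (hL _ 0).2 (Or.inl rfl)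
    rcases (hL _ f).1 hZ with hf0 | ⟨v, hv, hv1⟩
    · exact absurd (hu.trans hf0) u.ne_zero
    have huv : u = v := Units.ext (hu.trans hv.symm)
    rw [← huv] at hv1
    refine (hL _ f).2 (Or.inr ⟨u, hu, ?_⟩)
    rw [Finsupp.le_def]
    intro a
    have h1 := Finsupp.le_def.mp hu1 a
    have h2 := Finsupp.le_def.mp hv1 a
    simp only [Finsupp.coe_zero, Pi.zero_apply, Finsupp.add_apply, setDiv_apply] at h1 h2 ⊢
    by_cases haY : a ∈ Y <;> by_cases haZ : a ∈ Z <;>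
      simp [haY, haZ, Finset.mem_inter] at h1 h2 ⊢ <;> omega
  -- case N = 1
  by_cases hN1 : N = 1
  · subst hN1
    have hPempty : Nat.primeFactors 1 = ∅ := Nat.primeFactors_one
    have hker : LinearMap.ker ev = ⊥ := by
      rw [eq_bot_iff]
      intro x hx
      have hx2 : (x : K) ∈ L (setDiv ((1:ℕ).primeFactors.biUnion G)) := x.2
      have hD0 : setDiv ((1:ℕ).primeFactors.biUnion G) = 0 := by
        rw [hPempty]
        simp [setDiv]
      have hx2' : (x : K) ∈ L 0 := (le_of_eq (congrArg L hD0)) hx2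
      obtain ⟨c, hc⟩ := hL0 _ hx2'
      have hevx : ev x = c := hev x c hc.symm
      have hc0 : c = 0 := by rw [← hevx]; exact hx
      have hx0 : (x : K) = 0 := by rw [← hc, hc0, map_zero]
      exact (Submodule.mem_bot k).2 (Subtype.ext hx0)
    haveI : IsEmpty { x : ℕ // x ∈ (1:ℕ).primeFactors } :=
      ⟨fun i => Finset.eq_empty_iff_forall_notMem.1 hPempty i.1 i.2⟩
    refine ⟨?_, ?_, ?_⟩
    · intro i
      exact absurd i.2 (Finset.eq_empty_iff_forall_notMem.1 hPempty i.1)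
    · rw [iSup_of_empty]
      exact hker.symm
    · rw [hker, finrank_bot, hPempty]
      simp
  -- main case
  have hPne : N.primeFactors.Nonempty := Nat.nonempty_primeFactors.2 (by omega)
  obtain ⟨r0, hr0⟩ := hPne
  have hsubX : ∀ r ∈ N.primeFactors, G r ⊆ N.primeFactors.biUnion G :=
    fun r hr => Finset.subset_biUnion_of_mem G hr
  have hX0 : (0:A) ∈ N.primeFactors.biUnion G := Finset.mem_biUnion.2 ⟨r0, hr0, hG0 r0⟩
  have hXne : (N.primeFactors.biUnion G).Nonempty := ⟨0, hX0⟩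
  have hrankLD : Module.finrank k (L (setDiv (N.primeFactors.biUnion G)))
      = (N.primeFactors.biUnion G).card := by
    rw [hRR _ (setDiv_nonneg _) (setDiv_ne_zero hXne), setDiv_deg]
    simp
  haveI hFD : FiniteDimensional k (L (setDiv (N.primeFactors.biUnion G))) :=
    FiniteDimensional.of_finrank_pos (by rw [hrankLD]; exact Finset.card_pos.2 hXne)
  have hconstD : ∀ c : k, algebraMap k K c ∈ L (setDiv (N.primeFactors.biUnion G)) :=
    fun c => hmono 0 _ (setDiv_nonneg _) (hconst c)
  have hevsurj : Function.Surjective ev := fun c =>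
    ⟨⟨algebraMap k K c, hconstD c⟩, hev _ c rfl⟩
  have hrankker : Module.finrank k (LinearMap.ker ev) + 1
      = (N.primeFactors.biUnion G).card := by
    have h := LinearMap.finrank_range_add_finrank_ker ev
    rw [LinearMap.range_eq_top.2 hevsurj, finrank_top, Module.finrank_self, hrankLD] at h
    omega
  -- rank of each L_0(D_r)
  have hMrank : ∀ r ∈ N.primeFactors,
      Module.finrank k ↥(LinearMap.ker ev ⊓
        Submodule.comap (L (setDiv (N.primeFactors.biUnion G))).subtype
          (L (setDiv (G r)))) + 1 = (G r).card := by
    intro r hr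
    have hle : L (setDiv (G r)) ≤ L (setDiv (N.primeFactors.biUnion G)) :=
      hmono _ _ (setDiv_mono (hsubX r hr))
    set Sr := Submodule.comap (L (setDiv (N.primeFactors.biUnion G))).subtype
      (L (setDiv (G r))) with hSrdef
    have hGrne : (G r).Nonempty := ⟨0, hG0 r⟩
    have hSrrank : Module.finrank k Sr = (G r).card := by
      rw [(Submodule.comapSubtypeEquivOfLe hle).finrank_eq,
        hRR _ (setDiv_nonneg _) (setDiv_ne_zero hGrne), setDiv_deg]
      simp
    set ev' : Sr →ₗ[k] k := ev.comp Sr.subtype with hev'def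
    have hsurj' : Function.Surjective ev' := by
      intro c
      refine ⟨⟨⟨algebraMap k K c, hconstD c⟩, ?_⟩, ?_⟩
      · exact hmono 0 _ (setDiv_nonneg _) (hconst c)
      · exact hev _ c rfl
    have h := LinearMap.finrank_range_add_finrank_ker (V := Sr) ev'
    rw [LinearMap.range_eq_top.2 hsurj', finrank_top, Module.finrank_self, hSrrank] at h
    have hMmap : LinearMap.ker ev ⊓ Sr = Submodule.map Sr.subtype (LinearMap.ker ev') := by
      rw [hev'def, LinearMap.ker_comp, Submodule.map_comap_subtype]
      exact inf_comm _ _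
    have hfr : Module.finrank k ↥(LinearMap.ker ev ⊓ Sr)
        = Module.finrank k ↥(LinearMap.ker ev') := by
      rw [hMmap, Submodule.finrank_map_subtype_eq]
    rw [hfr]
    omega
  -- disjointness
  have hdisj : ∀ r ∈ N.primeFactors, ∀ T : Finset ℕ, T ⊆ N.primeFactors → r ∉ T →
      Disjoint
        (LinearMap.ker ev ⊓ Submodule.comap
          (L (setDiv (N.primeFactors.biUnion G))).subtype (L (setDiv (G r))))
        (⨆ s ∈ T, LinearMap.ker ev ⊓
          Submodule.comap (L (setDiv (N.primeFactors.biUnion G))).subtype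
            (L (setDiv (G s)))) := by
    intro r hr T hT hrT
    have hsuple : (⨆ s ∈ T, LinearMap.ker ev ⊓
        Submodule.comap (L (setDiv (N.primeFactors.biUnion G))).subtype (L (setDiv (G s))))
        ≤ Submodule.comap (L (setDiv (N.primeFactors.biUnion G))).subtype
            (L (setDiv (T.biUnion G))) := by
      refine iSup₂_le fun s hs => ?_
      exact le_trans inf_le_right (Submodule.comap_mono (hmono _ _ (setDiv_mono
        (Finset.subset_biUnion_of_mem G hs))))
    rw [Submodule.disjoint_def]
    intro x hx1 hx2
    have hxr : (x:K) ∈ L (setDiv (G r)) := hx1.2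
    have hxT : (x:K) ∈ L (setDiv (T.biUnion G)) := hsuple hx2
    have h3 := hLinf _ _ _ hxr hxT
    have hsub : (G r ∩ T.biUnion G) ⊆ {0} := by
      intro a ha
      rw [Finset.mem_inter, Finset.mem_biUnion] at ha
      obtain ⟨haGr, s, hsT, haGs⟩ := ha
      have hne : r ≠ s := fun h => hrT (h ▸ hsT)
      simp [hpair r hr s (hT hsT) hne a haGr haGs]
    have h4 : (x:K) ∈ L (setDiv ({0} : Finset A)) :=
      hmono _ _ (setDiv_mono hsub) h3
    obtain ⟨c, hc⟩ := hLone _ h4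
    have hc0 : c = 0 := (hev x c hc.symm).symm.trans (LinearMap.mem_ker.1 hx1.1)
    have hx0 : (x : K) = 0 := by rw [← hc, hc0, map_zero]
    exact Subtype.ext hx0
  -- rank of the sup
  have hsupRank : ∀ T : Finset ℕ, T ⊆ N.primeFactors →
      Module.finrank k ↥(⨆ s ∈ T, LinearMap.ker ev ⊓
        Submodule.comap (L (setDiv (N.primeFactors.biUnion G))).subtype (L (setDiv (G s))))
      = ∑ s ∈ T, Module.finrank k ↥(LinearMap.ker ev ⊓
        Submodule.comap (L (setDiv (N.primeFactors.biUnion G))).subtype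
          (L (setDiv (G s)))) := by
    intro T
    induction T using Finset.induction_on with
    | empty => intro _; simp
    | insert a T ha ih =>
      intro hsub'
      have haP : a ∈ N.primeFactors := hsub' (Finset.mem_insert_self a T)
      have hTP : T ⊆ N.primeFactors := fun y hy => hsub' (Finset.mem_insert_of_mem hy)
      rw [Finset.iSup_insert, Finset.sum_insert ha, ← ih hTP]
      have hd := hdisj a haP T hTP ha
      have hadd := Submodule.finrank_sup_add_finrank_inf_eq
        (LinearMap.ker ev ⊓ Submodule.comap
          (L (setDiv (N.primeFactors.biUnion G))).subtype (L (setDiv (G a))))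
        (⨆ s ∈ T, LinearMap.ker ev ⊓
          Submodule.comap (L (setDiv (N.primeFactors.biUnion G))).subtype
            (L (setDiv (G s))))
      rw [hd.eq_bot, finrank_bot, add_zero] at hadd
      exact hadd
  -- cardinality of X
  have hdisjGG : ∀ r ∈ N.primeFactors, ∀ s ∈ N.primeFactors, r ≠ s →
      Disjoint ((G r).erase 0) ((G s).erase 0) := by
    intro r hrP s hsP hrs
    rw [Finset.disjoint_left]
    intro a har has
    rw [Finset.mem_erase] at har has
    exact har.1 (hpair r hrP s hsP hrs a har.2 has.2)
  have hXcard : (N.primeFactors.biUnion G).card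
      = 1 + ∑ r ∈ N.primeFactors, ((G r).card - 1) := by
    have hXeq : N.primeFactors.biUnion G =
        insert (0:A) (N.primeFactors.biUnion fun r => (G r).erase 0) := by
      ext a
      simp only [Finset.mem_biUnion, Finset.mem_insert, Finset.mem_erase]
      constructor
      · rintro ⟨r, hrP, haG⟩
        by_cases h0 : a = 0
        · exact Or.inl h0
        · exact Or.inr ⟨r, hrP, h0, haG⟩
      · rintro (rfl | ⟨r, hrP, _, haG⟩)
        · exact ⟨r0, hr0, hG0 r0⟩
        · exact ⟨r, hrP, haG⟩
    rw [hXeq, Finset.card_insert_of_notMem (by simp), Finset.card_biUnion hdisjGG]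
    rw [Finset.sum_congr rfl fun r _ => Finset.card_erase_of_mem (hG0 r)]
    omega
  have hkerrank : Module.finrank k (LinearMap.ker ev)
      = ∑ r ∈ N.primeFactors, ((G r).card - 1) := by
    omega
  -- sup equals the kernel
  have hsupeq : (⨆ s ∈ N.primeFactors, LinearMap.ker ev ⊓
      Submodule.comap (L (setDiv (N.primeFactors.biUnion G))).subtype (L (setDiv (G s))))
      = LinearMap.ker ev := by
    have hle : (⨆ s ∈ N.primeFactors, LinearMap.ker ev ⊓
        Submodule.comap (L (setDiv (N.primeFactors.biUnion G))).subtype (L (setDiv (G s))))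
        ≤ LinearMap.ker ev := iSup₂_le fun s _ => inf_le_left
    refine Submodule.eq_of_le_of_finrank_le hle ?_
    rw [hsupRank _ (subset_refl _), hkerrank]
    exact le_of_eq (Finset.sum_congr rfl fun s hs => by have := hMrank s hs; omega)
  refine ⟨?_, ?_, ?_⟩
  · intro i
    have hle2 : (⨆ (j : {x // x ∈ N.primeFactors}) (_ : j ≠ i),
        LinearMap.ker ev ⊓ Submodule.comap
          (L (setDiv (N.primeFactors.biUnion G))).subtype (L (setDiv (G (j:ℕ)))))
        ≤ ⨆ s ∈ N.primeFactors.erase (i:ℕ), LinearMap.ker ev ⊓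
          Submodule.comap (L (setDiv (N.primeFactors.biUnion G))).subtype
            (L (setDiv (G s))) := by
      refine iSup₂_le fun j hj => ?_
      have hmem : (j:ℕ) ∈ N.primeFactors.erase (i:ℕ) :=
        Finset.mem_erase.2 ⟨fun h => hj (Subtype.ext h), j.2⟩
      exact le_iSup₂ (f := fun s (_ : s ∈ N.primeFactors.erase (i:ℕ)) =>
        LinearMap.ker ev ⊓ Submodule.comap
          (L (setDiv (N.primeFactors.biUnion G))).subtype (L (setDiv (G s)))) (j:ℕ) hmem
    exact (hdisj i.1 i.2 _ (Finset.erase_subset _ _) (Finset.notMem_erase _ _)).mono_right hle2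
  · rw [iSup_subtype]
    exact hsupeq
  · have h1 : (Module.finrank k (LinearMap.ker ev) : ℂ)
        = ∑ r ∈ N.primeFactors, (((G r).card : ℂ) - 1) := by
      rw [hkerrank, Nat.cast_sum]
      refine Finset.sum_congr rfl fun r hr => ?_
      have h2 : 1 ≤ (G r).card := Finset.card_pos.2 ⟨0, hG0 r⟩
      rw [Nat.cast_sub h2, Nat.cast_one]
    rw [h1]
    exact Finset.sum_congr rfl fun r hr => by rw [hcardG r hr]
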